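/- For a zero-mean wide-sense stationary process Y with absolutely summable autocorrelation R (Σ_τ |R[τ]| < ∞), and fixed distinct frequency indices with f_k = k/T, f_{k'} = k'/T held at fixed distinct rational values as T → ∞, the cross-correlation E[F_k conj(F_{k'})] of normalized DFT coefficients tends to 0. -/

import Mathlib

open Finset Filter

/-- Cross-correlation `E[F_k conj(F_{k'})]` of normalized DFT coefficients of a zero-mean
wide-sense stationary process with autocorrelation `R`, expressed through `R`:
`(1/T) ∑_{t,t'} R[t-t'] e^{-i2πkt/T} e^{i2πk't'/T}`. -/
noncomputable def dftCross (R : ℤ → ℝ) (T k k' : ℕ) : ℂ :=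
  (1 / (T : ℂ)) *
    ∑ t : Fin T, ∑ t' : Fin T,
      (R ((t : ℤ) - (t' : ℤ)) : ℂ) *
        Complex.exp (-(2 * Real.pi * Complex.I * (k : ℂ) * ((t : ℕ) : ℂ)) / (T : ℂ)) *
        Complex.exp ((2 * Real.pi * Complex.I * (k' : ℂ) * ((t' : ℕ) : ℂ)) / (T : ℂ))

lemma geom_range_bound {w : ℂ} (hw : w ≠ 1) (hw1 : ‖w‖ = 1) (m : ℕ) :
    ‖∑ i ∈ Finset.range m, w ^ i‖ ≤ 2 / ‖w - 1‖ := by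
  rw [geom_sum_eq hw, norm_div]
  have hpos : (0:ℝ) < ‖w - 1‖ := norm_pos_iff.mpr (sub_ne_zero.mpr hw)
  gcongr
  calc ‖w ^ m - 1‖ ≤ ‖w ^ m‖ + ‖(1:ℂ)‖ := norm_sub_le _ _
      _ = 2 := by rw [norm_pow, hw1]; norm_num

lemma geom_ico_bound {w : ℂ} (hw : w ≠ 1) (hw1 : ‖w‖ = 1) (a b : ℕ) :
    ‖∑ i ∈ Finset.Ico a b, w ^ i‖ ≤ 4 / ‖w - 1‖ := by
  rcases le_or_gt a b with h | h
  · rw [Finset.sum_Ico_eq_sub _ h]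
    calc ‖∑ i ∈ Finset.range b, w ^ i - ∑ i ∈ Finset.range a, w ^ i‖
        ≤ ‖∑ i ∈ Finset.range b, w ^ i‖ + ‖∑ i ∈ Finset.range a, w ^ i‖ := norm_sub_le _ _
      _ ≤ 2 / ‖w - 1‖ + 2 / ‖w - 1‖ := add_le_add (geom_range_bound hw hw1 b) (geom_range_bound hw hw1 a)
      _ = 4 / ‖w - 1‖ := by ring
  · rw [Finset.Ico_eq_empty (by omega), Finset.sum_empty, norm_zero]
    positivity

lemma fiber_bound {w : ℂ} (hw : w ≠ 1) (hw1 : ‖w‖ = 1) (T : ℕ) (τ : ℤ) :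
    ‖∑ p ∈ Finset.univ.filter (fun p : Fin T × Fin T => ((p.1 : ℕ) : ℤ) - ((p.2 : ℕ) : ℤ) = τ),
        w ^ (p.2 : ℕ)‖ ≤ 4 / ‖w - 1‖ := by
  have := geom_ico_bound hw hw1 ((-τ).toNat) ((min (T:ℤ) ((T:ℤ) - τ)).toNat)
  rw [← Finset.sum_nbij (fun p : Fin T × Fin T => (p.2 : ℕ)) ?_ ?_ ?_ (fun a _ => rfl)] at this
  · exact this
  · rintro ⟨t, t'⟩ hp
    simp only [Finset.mem_filter, Finset.mem_univ, true_and] at hp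
    have h1 : (t : ℕ) < T := t.isLt
    have h2 : (t' : ℕ) < T := t'.isLt
    simp only [Finset.mem_Ico]
    omega
  · rintro ⟨t, t'⟩ hp ⟨s, s'⟩ hq h
    simp only [Finset.coe_filter, Set.mem_setOf_eq, Finset.mem_univ, true_and] at hp hq
    simp only at h
    have ht' : t' = s' := Fin.ext h
    subst ht'
    have : (t : ℕ) = (s : ℕ) := by omega
    exact Prod.ext (Fin.ext this) rfl
  · intro n hn
    simp only [Finset.coe_Ico, Set.mem_Ico] at hn
    have h1 : n < T := by omega
    have h2 : ((n : ℤ) + τ).toNat < T := by omega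
    refine ⟨(⟨((n : ℤ) + τ).toNat, h2⟩, ⟨n, h1⟩), ?_, rfl⟩
    simp only [Finset.coe_filter, Set.mem_setOf_eq, Finset.mem_univ, true_and]
    omega

lemma key (R : ℤ → ℝ) (hR : Summable fun τ : ℤ => |R τ|) (f : ℝ) {w : ℂ}
    (hw : w ≠ 1) (hw1 : ‖w‖ = 1) (T : ℕ) :
    ‖∑ p : Fin T × Fin T,
        (R (((p.1 : ℕ) : ℤ) - ((p.2 : ℕ) : ℤ)) : ℂ) *
          Complex.exp ((-(2 * Real.pi * f) * (Int.cast (((p.1 : ℕ) : ℤ) - ((p.2 : ℕ) : ℤ)) : ℂ)) * Complex.I) *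
          w ^ ((p.2 : ℕ))‖
      ≤ (4 / ‖w - 1‖) * ∑' τ : ℤ, |R τ| := by
  classical
  set φ : Fin T × Fin T → ℤ := fun p => ((p.1 : ℕ) : ℤ) - ((p.2 : ℕ) : ℤ) with hφ
  set g : ℤ → ℂ := fun τ => (R τ : ℂ) * Complex.exp ((-(2 * Real.pi * f) * (τ : ℂ)) * Complex.I) with hg
  have hre : ∑ p : Fin T × Fin T, g (φ p) * w ^ ((p.2 : ℕ))
      = ∑ τ ∈ Finset.univ.image φ, ∑ p ∈ Finset.univ.filter (fun p => φ p = τ), g (φ p) * w ^ ((p.2 : ℕ)) :=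
    (Finset.sum_fiberwise_of_maps_to (fun p _ => Finset.mem_image_of_mem φ (Finset.mem_univ p)) _).symm
  calc ‖∑ p : Fin T × Fin T, g (φ p) * w ^ ((p.2 : ℕ))‖
      = ‖∑ τ ∈ Finset.univ.image φ, g τ * ∑ p ∈ Finset.univ.filter (fun p => φ p = τ), w ^ ((p.2 : ℕ))‖ := by
        rw [hre]
        congr 1
        refine Finset.sum_congr rfl fun τ _ => ?_
        rw [Finset.mul_sum]
        refine Finset.sum_congr rfl fun p hp => ?_
        rw [(Finset.mem_filter.mp hp).2]
    _ ≤ ∑ τ ∈ Finset.univ.image φ, ‖g τ * ∑ p ∈ Finset.univ.filter (fun p => φ p = τ), w ^ ((p.2 : ℕ))‖ :=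
        norm_sum_le _ _
    _ ≤ ∑ τ ∈ Finset.univ.image φ, |R τ| * (4 / ‖w - 1‖) := by
        refine Finset.sum_le_sum fun τ _ => ?_
        rw [norm_mul]
        have hgτ : ‖g τ‖ = |R τ| := by
          rw [hg]
          simp only [norm_mul]
          rw [Complex.norm_real, Real.norm_eq_abs]
          have : (-(2 * Real.pi * f) * (τ : ℂ)) * Complex.I = ((-(2 * Real.pi * f) * τ : ℝ) : ℂ) * Complex.I := by
            push_cast; ring
          rw [this, Complex.norm_exp_ofReal_mul_I, mul_one]
        rw [hgτ]
        exact mul_le_mul_of_nonneg_left (fiber_bound hw hw1 T τ) (abs_nonneg _)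
    _ = (∑ τ ∈ Finset.univ.image φ, |R τ|) * (4 / ‖w - 1‖) := (Finset.sum_mul _ _ _).symm
    _ ≤ (∑' τ : ℤ, |R τ|) * (4 / ‖w - 1‖) := by
        exact mul_le_mul_of_nonneg_right (hR.sum_le_tsum _ (fun i _ => abs_nonneg _)) (by positivity)
    _ = (4 / ‖w - 1‖) * ∑' τ : ℤ, |R τ| := mul_comm _ _

lemma term_eq (r : ℝ) (A B A' C : ℂ) (m : ℕ) (h : A + B = A' + (m : ℂ) * C) :
    (r : ℂ) * Complex.exp A * Complex.exp B
      = (r : ℂ) * Complex.exp A' * Complex.exp C ^ m := by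
  rw [mul_assoc, ← Complex.exp_add, h, Complex.exp_add, Complex.exp_nat_mul, mul_assoc]

/-- For a zero-mean wide-sense stationary process with absolutely summable autocorrelation
`R`, and frequency indices `k n`, `k' n` held at fixed distinct frequencies
`f = k n / T n ≠ f' = k' n / T n` as the sequence length `T n → ∞`, the cross-correlation
of normalized DFT coefficients tends to `0`. -/
theorem dft_asymptotic_decorrelation (R : ℤ → ℝ) (hR : Summable fun τ : ℤ => |R τ|)
    (f f' : ℝ) (hf0 : 0 ≤ f) (hf1 : f < 1) (hf'0 : 0 ≤ f') (hf'1 : f' < 1) (hne : f ≠ f')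
    (T : ℕ → ℕ) (hTmono : StrictMono T) (hTpos : ∀ n, 0 < T n)
    (k k' : ℕ → ℕ)
    (hk : ∀ n, (k n : ℝ) = f * T n) (hk' : ∀ n, (k' n : ℝ) = f' * T n) :
    Tendsto (fun n => dftCross R (T n) (k n) (k' n)) atTop (nhds 0) := by
  set w : ℂ := Complex.exp (((2 * Real.pi * (f' - f) : ℝ) : ℂ) * Complex.I) with hwdef
  have hw1 : ‖w‖ = 1 := by
    rw [hwdef, Complex.norm_exp_ofReal_mul_I]
  have hw : w ≠ 1 := by
    rw [hwdef, ne_eq, Complex.exp_eq_one_iff]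
    rintro ⟨n, hn⟩
    have h1 : ((2 * Real.pi * (f' - f) : ℝ) : ℂ) * Complex.I
        = (((n : ℝ) * (2 * Real.pi) : ℝ) : ℂ) * Complex.I := by
      push_cast at hn ⊢; linear_combination hn
    have h2 : (2 * Real.pi * (f' - f) : ℝ) = (n : ℝ) * (2 * Real.pi) :=
      Complex.ofReal_inj.mp (mul_right_cancel₀ Complex.I_ne_zero h1)
    have h3 : f' - f = (n : ℝ) := by
      have hπ : (0:ℝ) < 2 * Real.pi := by positivity
      apply mul_left_cancel₀ (ne_of_gt hπ)
      linarith [h2]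
    have hb1 : (n : ℝ) < 1 := by rw [← h3]; linarith
    have hb2 : (-1 : ℝ) < (n : ℝ) := by rw [← h3]; linarith
    have hn1 : n < 1 := by exact_mod_cast hb1
    have hn2 : -1 < n := by exact_mod_cast hb2
    have : n = 0 := by omega
    subst this
    simp at h3
    exact hne (by linarith)
  -- rewrite dftCross
  have hrw : ∀ n, dftCross R (T n) (k n) (k' n)
      = (1 / (T n : ℂ)) * ∑ p : Fin (T n) × Fin (T n),
          (R (((p.1 : ℕ) : ℤ) - ((p.2 : ℕ) : ℤ)) : ℂ) *
            Complex.exp ((-(2 * Real.pi * f) *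
              (Int.cast (((p.1 : ℕ) : ℤ) - ((p.2 : ℕ) : ℤ)) : ℂ)) * Complex.I) *
            w ^ ((p.2 : ℕ)) := by
    intro n
    rw [dftCross]
    congr 1
    rw [← Fintype.sum_prod_type']
    refine Finset.sum_congr rfl fun p _ => ?_
    have hT0 : ((T n : ℂ)) ≠ 0 := by
      exact_mod_cast Nat.cast_ne_zero.mpr (hTpos n).ne'
    have hkc : ((k n : ℂ)) = (f : ℂ) * (T n : ℂ) := by
      have := hk n; exact_mod_cast congrArg Complex.ofReal this
    have hk'c : ((k' n : ℂ)) = (f' : ℂ) * (T n : ℂ) := by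
      have := hk' n; exact_mod_cast congrArg Complex.ofReal this
    rw [hwdef]
    refine term_eq _ _ _ _ _ _ ?_
    rw [hkc, hk'c]
    push_cast
    field_simp
    ring
  have hbound : ∀ n, ‖dftCross R (T n) (k n) (k' n)‖
      ≤ ((4 / ‖w - 1‖) * ∑' τ : ℤ, |R τ|) / (T n : ℝ) := by
    intro n
    rw [hrw n, norm_mul]
    have h1 : ‖(1 / (T n : ℂ))‖ = 1 / (T n : ℝ) := by
      rw [norm_div, norm_one, Complex.norm_natCast]
    rw [h1, div_eq_mul_one_div ((4 / ‖w - 1‖) * ∑' τ : ℤ, |R τ|) ((T n : ℝ)),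
      mul_comm ((4 / ‖w - 1‖) * ∑' τ : ℤ, |R τ|) (1 / (T n : ℝ))]
    exact mul_le_mul_of_nonneg_left (key R hR f hw hw1 (T n)) (by positivity)
  refine squeeze_zero_norm hbound ?_
  exact Tendsto.div_atTop tendsto_const_nhds
    (tendsto_natCast_atTop_atTop.comp hTmono.tendsto_atTop)
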